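/- arXiv:2510.13650 — 4 statements merged into one kernel-verified Lean document; each statement's English description precedes it below -/
import Mathlib

section
/- Let Ω ⊆ ℝⁿ, f ∈ C¹(Ω, ℝⁿ), C > 0, V ∈ C¹(Ω, ℝ) and φ ∈ C¹(Ω, ℝ^m) satisfy C|φ(x)|² − |Dφ(x)·f(x)|² + ∇V(x)·f(x) ≥ 0 for all x ∈ Ω. Then for any solution x(t) of x' = f(x) with x(t+T) = x(t) for some T > 0 and ∫₀^T φ(x(t)) dt = 0, either φ(x(t)) = 0 for all t, or T ≥ 2π/√C. -/
open scoped Real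

open MeasureTheory intervalIntegral AddCircle Complex

section parseval
variable {T : ℝ} [hT : Fact (0 < T)]

lemma parseval_cont (F : C(AddCircle T, ℂ)) :
    ∑' n : ℤ, ‖fourierCoeff (⇑F) n‖ ^ 2 = ∫ t : AddCircle T, ‖F t‖ ^ 2 ∂haarAddCircle := by
  have h := tsum_sq_fourierCoeff (ContinuousMap.toLp (E := ℂ) 2 haarAddCircle ℂ F)
  simp_rw [fourierCoeff_toLp] at h
  rw [h]
  refine integral_congr_ae ?_
  filter_upwards [ContinuousMap.coeFn_toLp (𝕜 := ℂ) (μ := haarAddCircle) (p := 2) F] with t ht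
  rw [ht]

lemma summable_parseval (F : C(AddCircle T, ℂ)) :
    Summable fun n : ℤ => ‖fourierCoeff (⇑F) n‖ ^ 2 := by
  have h := (lp.memℓp ((fourierBasis (T := T)).repr
    (ContinuousMap.toLp (E := ℂ) 2 haarAddCircle ℂ F))).summable (by norm_num)
  simp_rw [fourierBasis_repr, fourierCoeff_toLp] at h
  convert h using 2 with n
  norm_num
end parseval

lemma wirtinger {T : ℝ} (hT : 0 < T) {g g' : ℝ → ℂ}
    (hg : ∀ t, HasDerivAt g (g' t) t) (hg'c : Continuous g')
    (hper : ∀ t, g (t + T) = g t) (hper' : ∀ t, g' (t + T) = g' t)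
    (hmean : (∫ t in (0:ℝ)..T, g t) = 0) :
    (2 * π / T) ^ 2 * ∫ t in (0:ℝ)..T, ‖g t‖ ^ 2 ≤ ∫ t in (0:ℝ)..T, ‖g' t‖ ^ 2 := by
  haveI : Fact (0 < T) := ⟨hT⟩
  have hgc : Continuous g := continuous_iff_continuousAt.mpr fun t => (hg t).continuousAt
  have hPg : Function.Periodic g T := hper
  have hPg' : Function.Periodic g' T := hper'
  set F : C(AddCircle T, ℂ) := ⟨hPg.lift, continuous_coinduced_dom.mpr hgc⟩ with hFdef
  set F' : C(AddCircle T, ℂ) := ⟨hPg'.lift, continuous_coinduced_dom.mpr hg'c⟩ with hF'def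
  have hF : ∀ t : ℝ, F ↑t = g t := fun t => hPg.lift_coe t
  have hF' : ∀ t : ℝ, F' ↑t = g' t := fun t => hPg'.lift_coe t
  have h0T : (0:ℝ) < T := hT
  -- integral conversion
  have key : ∀ (h : ℝ → ℂ) (H : C(AddCircle T, ℂ)), (∀ t : ℝ, H ↑t = h t) →
      T * ∫ z, ‖H z‖ ^ 2 ∂haarAddCircle = ∫ t in (0:ℝ)..T, ‖h t‖ ^ 2 := by
    intro h H hH
    have h1 := AddCircle.intervalIntegral_preimage T 0 (fun z => ‖H z‖ ^ 2)
    rw [volume_eq_smul_haarAddCircle, MeasureTheory.integral_smul_measure, ENNReal.toReal_ofReal hT.le] at h1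
    simp only [zero_add, hH, smul_eq_mul] at h1
    rw [← h1]
  -- bridge between fourierCoeff and fourierCoeffOn
  have hab : (0:ℝ) < 0 + T := by linarith
  have hbr : ∀ (h : ℝ → ℂ) (H : C(AddCircle T, ℂ)), (∀ t : ℝ, H ↑t = h t) → ∀ n : ℤ,
      fourierCoeff (⇑H) n = fourierCoeffOn hab h n := by
    intro h H hH n
    rw [← fourierCoeff_liftIoc_eq]
    congr 1
    funext z
    obtain ⟨x, hx, rfl⟩ : ∃ x : ℝ, x ∈ Set.Ioc 0 (0 + T) ∧ (x : AddCircle T) = z := by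
      refine ⟨(equivIoc T 0 z : ℝ), (equivIoc T 0 z).2, ?_⟩
      exact (equivIoc T 0).symm_apply_apply z
    rw [hH, AddCircle.liftIoc_coe_apply hx]
  have hc0 : fourierCoeff (⇑F) 0 = 0 := by
    rw [fourierCoeff_eq_intervalIntegral _ 0 0]
    simp only [zero_add, neg_zero, hF, fourier_zero, one_smul, hmean, smul_zero]
  have hgT : g T = g 0 := by have := hper 0; rwa [zero_add] at this
  have hrel : ∀ n : ℤ, n ≠ 0 →
      fourierCoeff (⇑F') n = (2 * π * Complex.I * n / T) * fourierCoeff (⇑F) n := by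
    intro n hn
    have h2 := fourierCoeffOn_of_hasDerivAt hab hn (f := g) (f' := g')
      (fun t _ => hg t) (hg'c.intervalIntegrable 0 (0 + T))
    rw [hper 0, sub_self, mul_zero, zero_sub, ← hbr g F hF, ← hbr g' F' hF'] at h2
    have hπ : (π : ℂ) ≠ 0 := Complex.ofReal_ne_zero.mpr Real.pi_ne_zero
    have hTne : (T : ℂ) ≠ 0 := Complex.ofReal_ne_zero.mpr hT.ne'
    have hnne : (n : ℂ) ≠ 0 := Int.cast_ne_zero.mpr hn
    push_cast at h2
    field_simp [Complex.I_ne_zero] at h2 ⊢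
    linear_combination -h2

  -- termwise inequality
  have hle : ∀ n : ℤ, (2 * π / T) ^ 2 * ‖fourierCoeff (⇑F) n‖ ^ 2 ≤ ‖fourierCoeff (⇑F') n‖ ^ 2 := by
    intro n
    rcases eq_or_ne n 0 with rfl | hn
    · rw [hc0]; simp only [norm_zero]; rw [zero_pow two_ne_zero, mul_zero]; positivity
    · rw [hrel n hn, norm_mul]
      have hnorm : ‖(2 * π * Complex.I * n / T : ℂ)‖ = 2 * π * |(n:ℝ)| / T := by
        simp only [norm_div, norm_mul, Complex.norm_I, Complex.norm_ofNat,
          Complex.norm_real, Complex.norm_intCast, Real.norm_eq_abs,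
          abs_of_pos Real.pi_pos, abs_of_pos hT, mul_one]
      rw [hnorm, mul_pow]
      have h1 : (1:ℝ) ≤ |(n:ℝ)| := by
        rw [← Int.cast_abs]; exact_mod_cast Int.one_le_abs hn
      have hbase : (2 * π / T) ^ 2 ≤ (2 * π * |(n:ℝ)| / T) ^ 2 := by
        apply pow_le_pow_left₀ (by positivity)
        have h2 : 2 * π ≤ 2 * π * |(n:ℝ)| := le_mul_of_one_le_right (by positivity) h1
        exact (div_le_div_iff_of_pos_right hT).mpr h2
      exact mul_le_mul_of_nonneg_right hbase (sq_nonneg _)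
  -- combine
  have hsum := Summable.tsum_le_tsum hle ((summable_parseval F).mul_left ((2 * π / T) ^ 2))
    (summable_parseval F')
  rw [tsum_mul_left, parseval_cont F, parseval_cont F'] at hsum
  have e1 := key g F hF
  have e2 := key g' F' hF'
  rw [← e1, ← e2]
  calc (2 * π / T) ^ 2 * (T * ∫ z, ‖F z‖ ^ 2 ∂haarAddCircle)
      = T * ((2 * π / T) ^ 2 * ∫ z, ‖F z‖ ^ 2 ∂haarAddCircle) := by ring
    _ ≤ T * ∫ z, ‖F' z‖ ^ 2 ∂haarAddCircle := by
        exact mul_le_mul_of_nonneg_left hsum hT.le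

lemma wirtinger_vec {m : ℕ} {T : ℝ} (hT : 0 < T) {G G' : ℝ → EuclideanSpace ℝ (Fin m)}
    (hG : ∀ t, HasDerivAt G (G' t) t) (hG'c : Continuous G')
    (hper : ∀ t, G (t + T) = G t) (hper' : ∀ t, G' (t + T) = G' t)
    (hmean : (∫ t in (0:ℝ)..T, G t) = 0) :
    (2 * π / T) ^ 2 * ∫ t in (0:ℝ)..T, ‖G t‖ ^ 2 ≤ ∫ t in (0:ℝ)..T, ‖G' t‖ ^ 2 := by
  have hGc : Continuous G := continuous_iff_continuousAt.mpr fun t => (hG t).continuousAt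
  set g : Fin m → ℝ → ℂ := fun i t => ((G t i : ℝ) : ℂ) with hgdef
  set g' : Fin m → ℝ → ℂ := fun i t => ((G' t i : ℝ) : ℂ) with hg'def
  have hderiv : ∀ i t, HasDerivAt (g i) (g' i t) t := by
    intro i t
    have h1 : HasDerivAt (fun t => G t i) (G' t i) t := by
      exact ((EuclideanSpace.proj (𝕜 := ℝ) i).hasFDerivAt.comp_hasDerivAt t (hG t))
    exact (Complex.ofRealCLM.hasFDerivAt.comp_hasDerivAt t h1)
  have hcont : ∀ i, Continuous (g' i) :=
    fun i => Complex.continuous_ofReal.comp ((EuclideanSpace.proj (𝕜 := ℝ) i).continuous.comp hG'c)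
  have hcontg : ∀ i, Continuous (g i) :=
    fun i => Complex.continuous_ofReal.comp ((EuclideanSpace.proj (𝕜 := ℝ) i).continuous.comp hGc)
  have hGi : IntervalIntegrable G MeasureTheory.volume 0 T := hGc.intervalIntegrable 0 T
  have hmean' : ∀ i, (∫ t in (0:ℝ)..T, g i t) = 0 := by
    intro i
    have h1 : (∫ t in (0:ℝ)..T, G t i) = 0 := by
      have := ((EuclideanSpace.proj (𝕜 := ℝ) i).intervalIntegral_comp_comm hGi).symm
      simp only [hmean, map_zero] at this
      exact this.symm
    rw [hgdef]
    simp only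
    rw [intervalIntegral.integral_ofReal, h1, Complex.ofReal_zero]
  have hWi : ∀ i : Fin m, (2 * π / T) ^ 2 * ∫ t in (0:ℝ)..T, ‖g i t‖ ^ 2
      ≤ ∫ t in (0:ℝ)..T, ‖g' i t‖ ^ 2 := by
    intro i
    refine wirtinger hT (hderiv i) (hcont i) (fun t => ?_) (fun t => ?_) (hmean' i)
    · simp only [hgdef, hper t]
    · simp only [hg'def, hper' t]
  -- norms as sums of coordinates
  have hnorm : ∀ (H : ℝ → EuclideanSpace ℝ (Fin m)) (t : ℝ),
      ‖H t‖ ^ 2 = ∑ i, ‖((H t i : ℝ) : ℂ)‖ ^ 2 := by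
    intro H t
    rw [EuclideanSpace.norm_eq, Real.sq_sqrt (by positivity)]
    congr 1; funext i
    simp [Complex.norm_real]
  have hintG : (∫ t in (0:ℝ)..T, ‖G t‖ ^ 2) = ∑ i, ∫ t in (0:ℝ)..T, ‖g i t‖ ^ 2 := by
    rw [← intervalIntegral.integral_finset_sum]
    · exact intervalIntegral.integral_congr fun t _ => hnorm G t
    · exact fun i _ => ((hcontg i).norm.pow 2).intervalIntegrable 0 T
  have hintG' : (∫ t in (0:ℝ)..T, ‖G' t‖ ^ 2) = ∑ i, ∫ t in (0:ℝ)..T, ‖g' i t‖ ^ 2 := by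
    rw [← intervalIntegral.integral_finset_sum]
    · exact intervalIntegral.integral_congr fun t _ => hnorm G' t
    · exact fun i _ => ((hcont i).norm.pow 2).intervalIntegrable 0 T
  rw [hintG, hintG', Finset.mul_sum]
  exact Finset.sum_le_sum fun i _ => hWi i


/-- Main proposition: a Lyapunov-like criterion giving a lower bound on periods.
If `C|φ(x)|² − |Dφ(x)·f(x)|² + DV(x)·f(x) ≥ 0` on `Ω`, then any periodic solution of
`x' = f(x)` with period `T > 0` lying in `Ω` along which `φ` has zero mean satisfies:
either `φ` vanishes identically along the orbit, or `T ≥ 2π/√C`. -/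
theorem period_lower_bound {n m : ℕ} (Ω : Set (EuclideanSpace ℝ (Fin n))) (hΩ : IsOpen Ω)
    (f : EuclideanSpace ℝ (Fin n) → EuclideanSpace ℝ (Fin n))
    (hf : ContDiffOn ℝ 1 f Ω)
    (C : ℝ) (hC : 0 < C)
    (V : EuclideanSpace ℝ (Fin n) → ℝ) (hV : ContDiffOn ℝ 1 V Ω)
    (φ : EuclideanSpace ℝ (Fin n) → EuclideanSpace ℝ (Fin m)) (hφ : ContDiffOn ℝ 1 φ Ω)
    (hineq : ∀ x ∈ Ω,
      C * ‖φ x‖ ^ 2 - ‖fderiv ℝ φ x (f x)‖ ^ 2 + fderiv ℝ V x (f x) ≥ 0)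
    (x : ℝ → EuclideanSpace ℝ (Fin n)) (hxΩ : ∀ t, x t ∈ Ω)
    (hsol : ∀ t, HasDerivAt x (f (x t)) t)
    (T : ℝ) (hT : 0 < T) (hper : ∀ t, x (t + T) = x t)
    (hmean : (∫ t in (0:ℝ)..T, φ (x t)) = 0) :
    (∀ t, φ (x t) = 0) ∨ 2 * π / Real.sqrt C ≤ T := by
  have hxc : Continuous x := continuous_iff_continuousAt.mpr fun t => (hsol t).continuousAt
  have hx0T : x T = x 0 := by simpa using hper 0
  set G : ℝ → EuclideanSpace ℝ (Fin m) := fun t => φ (x t) with hGdef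
  set G' : ℝ → EuclideanSpace ℝ (Fin m) := fun t => fderiv ℝ φ (x t) (f (x t)) with hG'def
  set W' : ℝ → ℝ := fun t => fderiv ℝ V (x t) (f (x t)) with hW'def
  have hφd : ∀ t, HasFDerivAt φ (fderiv ℝ φ (x t)) (x t) := fun t =>
    ((hφ.differentiableOn one_ne_zero).differentiableAt (hΩ.mem_nhds (hxΩ t))).hasFDerivAt
  have hVd : ∀ t, HasFDerivAt V (fderiv ℝ V (x t)) (x t) := fun t =>
    ((hV.differentiableOn one_ne_zero).differentiableAt (hΩ.mem_nhds (hxΩ t))).hasFDerivAt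
  have hG : ∀ t, HasDerivAt G (G' t) t := fun t => (hφd t).comp_hasDerivAt t (hsol t)
  have hW : ∀ t, HasDerivAt (fun s => V (x s)) (W' t) t := fun t =>
    (hVd t).comp_hasDerivAt t (hsol t)
  have hGc : Continuous G := (hφ.continuousOn.comp_continuous hxc hxΩ)
  have hfx : Continuous fun t => f (x t) := (hf.continuousOn.comp_continuous hxc hxΩ)
  have hφ' : ContinuousOn (fderiv ℝ φ) Ω := hφ.continuousOn_fderiv_of_isOpen hΩ le_rfl
  have hV' : ContinuousOn (fderiv ℝ V) Ω := hV.continuousOn_fderiv_of_isOpen hΩ le_rfl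
  have hG'c : Continuous G' := ((hφ'.comp_continuous hxc hxΩ).clm_apply hfx)
  have hW'c : Continuous W' := ((hV'.comp_continuous hxc hxΩ).clm_apply hfx)
  have hGper : ∀ t, G (t + T) = G t := fun t => by simp only [hGdef, hper t]
  have hG'per : ∀ t, G' (t + T) = G' t := fun t => by simp only [hG'def, hper t]
  -- ∫ W' = 0
  have hWint : (∫ t in (0:ℝ)..T, W' t) = 0 := by
    rw [intervalIntegral.integral_eq_sub_of_hasDerivAt (fun t _ => hW t)
      (hW'c.intervalIntegrable 0 T)]
    rw [hx0T, sub_self]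
  -- integrability
  have hIGsq : IntervalIntegrable (fun t => ‖G t‖ ^ 2) MeasureTheory.volume 0 T :=
    (hGc.norm.pow 2).intervalIntegrable 0 T
  have hIG'sq : IntervalIntegrable (fun t => ‖G' t‖ ^ 2) MeasureTheory.volume 0 T :=
    (hG'c.norm.pow 2).intervalIntegrable 0 T
  -- integrated inequality
  have hkey : (∫ t in (0:ℝ)..T, ‖G' t‖ ^ 2) ≤ C * ∫ t in (0:ℝ)..T, ‖G t‖ ^ 2 := by
    have h0 : 0 ≤ ∫ t in (0:ℝ)..T, (C * ‖G t‖ ^ 2 - ‖G' t‖ ^ 2 + W' t) :=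
      intervalIntegral.integral_nonneg hT.le fun u _ => hineq (x u) (hxΩ u)
    rw [intervalIntegral.integral_add ((hIGsq.const_mul C).sub hIG'sq)
        (hW'c.intervalIntegrable 0 T),
      intervalIntegral.integral_sub (hIGsq.const_mul C) hIG'sq,
      intervalIntegral.integral_const_mul, hWint, add_zero, sub_nonneg] at h0
    exact h0
  have hIG : (0:ℝ) ≤ ∫ t in (0:ℝ)..T, ‖G t‖ ^ 2 :=
    intervalIntegral.integral_nonneg hT.le fun u _ => sq_nonneg _
  rcases hIG.eq_or_lt with h0 | hpos
  · -- φ vanishes along the orbit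
    left
    intro t
    by_contra hne
    obtain ⟨t₁, ht₁, heq⟩ := (Function.Periodic.exists_mem_Ico₀ (fun s => hGper s) hT t)
    have ht₁' : t₁ ∈ Set.Icc 0 T := ⟨ht₁.1, ht₁.2.le⟩
    have hpos' : 0 < ∫ u in (0:ℝ)..T, ‖G u‖ ^ 2 := by
      refine intervalIntegral.integral_pos hT ((hGc.norm.pow 2).continuousOn) (fun u _ => sq_nonneg _) ?_
      refine ⟨t₁, ht₁', ?_⟩
      have hne1 : G t₁ ≠ 0 := by rw [← heq]; exact hne
      exact pow_pos (norm_pos_iff.mpr hne1) 2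
    exact absurd h0.symm hpos'.ne'
  · -- period bound
    right
    have hwir := wirtinger_vec hT hG hG'c hGper hG'per hmean
    have h2 : (2 * π / T) ^ 2 * (∫ t in (0:ℝ)..T, ‖G t‖ ^ 2)
        ≤ C * ∫ t in (0:ℝ)..T, ‖G t‖ ^ 2 := le_trans hwir hkey
    have h3 : (2 * π / T) ^ 2 ≤ C := le_of_mul_le_mul_right (by
      calc (2 * π / T) ^ 2 * (∫ t in (0:ℝ)..T, ‖G t‖ ^ 2) ≤ _ := h2) hpos
    have h4 : 2 * π / T ≤ Real.sqrt C := by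
      rw [← Real.sqrt_sq (by positivity : (0:ℝ) ≤ 2 * π / T)]
      exact Real.sqrt_le_sqrt h3
    have hsC : 0 < Real.sqrt C := Real.sqrt_pos.mpr hC
    rw [div_le_iff₀ hT] at h4
    rw [div_le_iff₀ hsC]
    calc 2 * π ≤ Real.sqrt C * T := h4
      _ = T * Real.sqrt C := mul_comm _ _
end

section
/- Let f : ℝⁿ → ℝⁿ be C¹ and globally Lipschitz with constant L > 0. Then for any non-constant periodic solution x(t) of x' = f(x) with period T > 0, one has T ≥ 2π/L. -/
open scoped Real
open MeasureTheory Complex Function AddCircle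

lemma parseval_aux (T : ℝ) (hT : 0 < T) [Fact (0 < T)] (H : C(AddCircle T, ℂ)) :
    Summable (fun n : ℤ => ‖fourierCoeff (H : AddCircle T → ℂ) n‖^2) ∧
    T * ∑' n : ℤ, ‖fourierCoeff (H : AddCircle T → ℂ) n‖^2
      = ∫ t in (0:ℝ)..T, ‖H (t : AddCircle T)‖^2 := by
  set F := ContinuousMap.toLp (E := ℂ) 2 haarAddCircle ℂ H with hF
  have hcoe : ∀ n, fourierCoeff (F : AddCircle T → ℂ) n = fourierCoeff (H : AddCircle T → ℂ) n :=
    fun n => fourierCoeff_toLp H n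
  have hsum : Summable (fun n : ℤ => ‖fourierCoeff (F : AddCircle T → ℂ) n‖^2) := by
    have hmem := lp.memℓp (fourierBasis.repr F)
    have := hmem.summable (by norm_num : (0:ℝ) < (2 : ENNReal).toReal)
    have h2 : ∀ n : ℤ, ‖fourierBasis.repr F n‖ ^ (2 : ENNReal).toReal
        = ‖fourierCoeff (F : AddCircle T → ℂ) n‖^2 := by
      intro n
      rw [fourierBasis_repr]
      norm_num [Real.rpow_natCast]
    simpa only [h2] using this
  have hpars := tsum_sq_fourierCoeff F
  have hae : ∫ t : AddCircle T, ‖F t‖^2 ∂haarAddCircle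
      = ∫ t : AddCircle T, ‖H t‖^2 ∂haarAddCircle := by
    apply integral_congr_ae
    filter_upwards [ContinuousMap.coeFn_toLp (p := 2) (𝕜 := ℂ) haarAddCircle H] with t ht
    rw [ht]
  have hvol : ∫ t in (0:ℝ)..T, ‖H (t : AddCircle T)‖^2
      = T * ∫ t : AddCircle T, ‖H t‖^2 ∂haarAddCircle := by
    have := AddCircle.intervalIntegral_preimage T 0 (fun z => ‖H z‖^2)
    rw [zero_add] at this
    rw [this, volume_eq_smul_haarAddCircle, integral_smul_measure,
      ENNReal.toReal_ofReal hT.le, smul_eq_mul]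
  constructor
  · simpa only [hcoe] using hsum
  · rw [hvol, ← hae, ← hpars]
    congr 1
    exact tsum_congr fun n => by rw [hcoe]

lemma wirtinger_aux (T : ℝ) (hT : 0 < T) (g g' : ℝ → ℂ)
    (hg : ∀ t, HasDerivAt g (g' t) t)
    (hgp : Function.Periodic g T)
    (hgp' : Function.Periodic g' T)
    (hc' : Continuous g')
    (hmean : (∫ t in (0:ℝ)..T, g t) = 0) :
    (∫ t in (0:ℝ)..T, ‖g t‖^2) ≤ (T/(2*π))^2 * ∫ t in (0:ℝ)..T, ‖g' t‖^2 := by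
  haveI : Fact (0 < T) := ⟨hT⟩
  have hc : Continuous g := continuous_iff_continuousAt.mpr fun t => (hg t).continuousAt
  set G : C(AddCircle T, ℂ) := ⟨hgp.lift, by rw [isQuotientMap_quotient_mk'.continuous_iff]; exact hc⟩ with hGdef
  set G' : C(AddCircle T, ℂ) := ⟨hgp'.lift, by rw [isQuotientMap_quotient_mk'.continuous_iff]; exact hc'⟩ with hG'def
  have hGx : ∀ x : ℝ, G (x : AddCircle T) = g x := fun x => hgp.lift_coe x
  have hG'x : ∀ x : ℝ, G' (x : AddCircle T) = g' x := fun x => hgp'.lift_coe x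
  have hcoeff : ∀ n : ℤ, fourierCoeff (G : AddCircle T → ℂ) n = fourierCoeffOn hT g n := by
    intro n
    rw [fourierCoeff_eq_intervalIntegral _ n 0, fourierCoeffOn_eq_integral]
    simp only [zero_add, hGx, fourier_coe_apply, sub_zero]
  have hcoeff' : ∀ n : ℤ, fourierCoeff (G' : AddCircle T → ℂ) n = fourierCoeffOn hT g' n := by
    intro n
    rw [fourierCoeff_eq_intervalIntegral _ n 0, fourierCoeffOn_eq_integral]
    simp only [zero_add, hG'x, fourier_coe_apply, sub_zero]
  -- coefficient inequality
  have hrel : ∀ n : ℤ, ‖fourierCoeff (G : AddCircle T → ℂ) n‖^2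
      ≤ (T/(2*π))^2 * ‖fourierCoeff (G' : AddCircle T → ℂ) n‖^2 := by
    intro n
    rcases eq_or_ne n 0 with rfl | hn
    · have h0 : fourierCoeffOn hT g 0 = 0 := by
        rw [fourierCoeffOn_eq_integral]
        simp only [neg_zero, fourier_zero, one_smul, sub_zero, hmean, smul_zero]
      rw [hcoeff, h0, norm_zero]
      norm_num
      positivity
    · have key : ‖fourierCoeffOn hT g n‖ ≤ (T/(2*π)) * ‖fourierCoeffOn hT g' n‖ := by
        have := fourierCoeffOn_of_hasDerivAt hT hn (fun x _ => hg x) (hc'.intervalIntegrable 0 T)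
        rw [show g T - g 0 = 0 by rw [← zero_add T, hgp 0, sub_self], mul_zero, zero_sub] at this
        rw [this, norm_mul, norm_neg, norm_mul, norm_div, norm_one]
        have h2 : ‖(-2 * ↑π * I * (n:ℂ))‖ = 2 * π * |(n:ℝ)| := by
          simp [norm_mul, abs_of_pos Real.pi_pos, Complex.norm_intCast, Complex.norm_real]
        have h3 : ‖((T:ℂ) - ((0:ℝ):ℂ))‖ = T := by
          simp [abs_of_pos hT]
        rw [h2, h3]
        have hn1 : (1:ℝ) ≤ |(n:ℝ)| := by
          rw [← Int.cast_abs]; exact_mod_cast Int.one_le_abs hn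
        set c := ‖fourierCoeffOn hT g' n‖ with hcdef
        have hc0 : 0 ≤ c := norm_nonneg _
        have hkey : 1 / (2*π*|(n:ℝ)|) * (T * c) = T/(2*π*|(n:ℝ)|) * c := by ring
        rw [hkey]
        have hstep : T/(2*π*|(n:ℝ)|) ≤ T/(2*π) := by
          apply div_le_div_of_nonneg_left hT.le (by positivity)
          nlinarith [Real.pi_pos]
        exact mul_le_mul_of_nonneg_right hstep hc0
      rw [hcoeff, hcoeff']
      calc ‖fourierCoeffOn hT g n‖^2 ≤ ((T/(2*π)) * ‖fourierCoeffOn hT g' n‖)^2 := by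
            apply pow_le_pow_left₀ (norm_nonneg _) key
        _ = (T/(2*π))^2 * ‖fourierCoeffOn hT g' n‖^2 := by ring
  obtain ⟨hsumG, hparsG⟩ := parseval_aux T hT G
  obtain ⟨hsumG', hparsG'⟩ := parseval_aux T hT G'
  have hint : (∫ t in (0:ℝ)..T, ‖g t‖^2) = T * ∑' n : ℤ, ‖fourierCoeff (G : AddCircle T → ℂ) n‖^2 := by
    rw [hparsG]; exact intervalIntegral.integral_congr fun t _ => by rw [hGx]
  have hint' : (∫ t in (0:ℝ)..T, ‖g' t‖^2) = T * ∑' n : ℤ, ‖fourierCoeff (G' : AddCircle T → ℂ) n‖^2 := by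
    rw [hparsG']; exact intervalIntegral.integral_congr fun t _ => by rw [hG'x]
  rw [hint, hint']
  have htsum : ∑' n : ℤ, ‖fourierCoeff (G : AddCircle T → ℂ) n‖^2
      ≤ ∑' n : ℤ, (T/(2*π))^2 * ‖fourierCoeff (G' : AddCircle T → ℂ) n‖^2 :=
    Summable.tsum_le_tsum hrel hsumG (hsumG'.mul_left _)
  rw [tsum_mul_left] at htsum
  calc T * ∑' n : ℤ, ‖fourierCoeff (G : AddCircle T → ℂ) n‖^2
      ≤ T * ((T/(2*π))^2 * ∑' n : ℤ, ‖fourierCoeff (G' : AddCircle T → ℂ) n‖^2) :=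
        mul_le_mul_of_nonneg_left htsum hT.le
    _ = (T/(2*π))^2 * (T * ∑' n : ℤ, ‖fourierCoeff (G' : AddCircle T → ℂ) n‖^2) := by ring

set_option maxHeartbeats 1000000 in
open MeasureTheory Complex Function in
/-- Yorke's theorem: if `f : ℝⁿ → ℝⁿ` is `C¹` and globally Lipschitz with constant `L > 0`,
then every non-constant periodic solution of `x' = f(x)` with period `T > 0` satisfies
`T ≥ 2π/L`. -/
theorem yorke_period_bound {n : ℕ}
    (f : EuclideanSpace ℝ (Fin n) → EuclideanSpace ℝ (Fin n))
    (hf : ContDiff ℝ 1 f)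
    (L : ℝ) (hL : 0 < L)
    (hlip : ∀ x y, ‖f x - f y‖ ≤ L * ‖x - y‖)
    (x : ℝ → EuclideanSpace ℝ (Fin n))
    (hsol : ∀ t, HasDerivAt x (f (x t)) t)
    (T : ℝ) (hT : 0 < T) (hper : ∀ t, x (t + T) = x t)
    (hnonconst : ∃ t s, x t ≠ x s) :
    2 * π / L ≤ T := by
  classical
  set y : ℝ → EuclideanSpace ℝ (Fin n) := fun t => f (x t) with hy_def
  set y' : ℝ → EuclideanSpace ℝ (Fin n) := fun t => fderiv ℝ f (x t) (y t) with hy'_def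
  have hx_cont : Continuous x := continuous_iff_continuousAt.mpr fun t => (hsol t).continuousAt
  have hy_cont : Continuous y := (hf.continuous).comp hx_cont
  have hy' : ∀ t, HasDerivAt y (y' t) t := fun t =>
    ((hf.differentiable one_ne_zero) (x t)).hasFDerivAt.comp_hasDerivAt t (hsol t)
  have hy'_cont : Continuous y' :=
    ((hf.continuous_fderiv one_ne_zero).comp hx_cont).clm_apply hy_cont
  -- Lipschitz bound on the derivative
  have hlipW : LipschitzWith L.toNNReal f := by
    apply LipschitzWith.of_dist_le_mul
    intro a b
    rw [dist_eq_norm, dist_eq_norm, Real.coe_toNNReal _ hL.le]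
    exact hlip a b
  have hfd_norm : ∀ z : EuclideanSpace ℝ (Fin n), ‖fderiv ℝ f z‖ ≤ L := fun z => by
    have := norm_fderiv_le_of_lipschitz ℝ (x₀ := z) hlipW
    rwa [Real.coe_toNNReal _ hL.le] at this
  have hy'_le : ∀ t, ‖y' t‖ ≤ L * ‖y t‖ := fun t =>
    le_trans ((fderiv ℝ f (x t)).le_opNorm (y t))
      (mul_le_mul_of_nonneg_right (hfd_norm (x t)) (norm_nonneg _))
  -- periodicity
  have hyper : Function.Periodic y T := fun t => by simp only [hy_def, hper t]
  have hy'per : Function.Periodic y' T := fun t => by simp only [hy'_def, hy_def, hper t]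
  -- mean zero
  have hmean : (∫ t in (0:ℝ)..T, y t) = 0 := by
    rw [intervalIntegral.integral_eq_sub_of_hasDerivAt (fun t _ => hsol t)
      (hy_cont.intervalIntegrable 0 T)]
    rw [show x T = x 0 by rw [← zero_add T, hper 0], sub_self]
  -- coordinates
  set Lc : Fin n → (EuclideanSpace ℝ (Fin n) →L[ℝ] ℂ) :=
    fun j => Complex.ofRealCLM.comp (EuclideanSpace.proj j) with hLc
  have hLcval : ∀ (j : Fin n) (v : EuclideanSpace ℝ (Fin n)), Lc j v = ((v j : ℝ) : ℂ) :=
    fun j v => rfl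
  have hLcnorm : ∀ (j : Fin n) (v : EuclideanSpace ℝ (Fin n)), ‖Lc j v‖ = ‖v j‖ := fun j v => by
    rw [hLcval]; exact Complex.norm_real _
  have hnormsq : ∀ v : EuclideanSpace ℝ (Fin n), ‖v‖^2 = ∑ j : Fin n, ‖Lc j v‖^2 := by
    intro v
    rw [EuclideanSpace.norm_eq v, Real.sq_sqrt (by positivity)]
    exact Finset.sum_congr rfl fun j _ => by rw [hLcnorm]
  -- Wirtinger per coordinate
  have hcoord : ∀ j : Fin n,
      (∫ t in (0:ℝ)..T, ‖Lc j (y t)‖^2) ≤ (T/(2*π))^2 * ∫ t in (0:ℝ)..T, ‖Lc j (y' t)‖^2 := by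
    intro j
    apply wirtinger_aux T hT (fun t => Lc j (y t)) (fun t => Lc j (y' t))
    · exact fun t => ((Lc j).hasFDerivAt).comp_hasDerivAt t (hy' t)
    · exact fun t => by simp only [hyper t]
    · exact fun t => by simp only [hy'per t]
    · exact (Lc j).continuous.comp hy'_cont
    · rw [(Lc j).intervalIntegral_comp_comm (hy_cont.intervalIntegrable 0 T), hmean, map_zero]
  -- integrability facts
  have hiy : ∀ j : Fin n, IntervalIntegrable (fun t => ‖Lc j (y t)‖^2) volume 0 T :=
    fun j => (((Lc j).continuous.comp hy_cont).norm.pow 2).intervalIntegrable 0 T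
  have hiy' : ∀ j : Fin n, IntervalIntegrable (fun t => ‖Lc j (y' t)‖^2) volume 0 T :=
    fun j => (((Lc j).continuous.comp hy'_cont).norm.pow 2).intervalIntegrable 0 T
  set A := ∫ t in (0:ℝ)..T, ‖y t‖^2 with hA
  set B := ∫ t in (0:ℝ)..T, ‖y' t‖^2 with hB
  have hAsum : A = ∑ j : Fin n, ∫ t in (0:ℝ)..T, ‖Lc j (y t)‖^2 := by
    rw [hA, ← intervalIntegral.integral_finset_sum (fun j _ => hiy j)]
    exact intervalIntegral.integral_congr fun t _ => hnormsq (y t)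
  have hBsum : B = ∑ j : Fin n, ∫ t in (0:ℝ)..T, ‖Lc j (y' t)‖^2 := by
    rw [hB, ← intervalIntegral.integral_finset_sum (fun j _ => hiy' j)]
    exact intervalIntegral.integral_congr fun t _ => hnormsq (y' t)
  have hAB : A ≤ (T/(2*π))^2 * B := by
    rw [hAsum, hBsum, Finset.mul_sum]
    exact Finset.sum_le_sum fun j _ => hcoord j
  have hBA : B ≤ L^2 * A := by
    rw [hB, hA, ← intervalIntegral.integral_const_mul]
    apply intervalIntegral.integral_mono_on hT.le
      ((hy'_cont.norm.pow 2).intervalIntegrable 0 T)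
      ((continuous_const.mul (hy_cont.norm.pow 2)).intervalIntegrable 0 T)
    intro t _
    have h1 := hy'_le t
    show ‖y' t‖^2 ≤ L^2 * ‖y t‖^2
    nlinarith [norm_nonneg (y' t), norm_nonneg (y t)]
  -- positivity of A
  have hApos : 0 < A := by
    have hy_ne : ∃ t₀, y t₀ ≠ 0 := by
      by_contra h
      push_neg at h
      obtain ⟨t, s, hts⟩ := hnonconst
      apply hts
      apply is_const_of_fderiv_eq_zero (𝕜 := ℝ) (fun u => (hsol u).differentiableAt) _ t s
      intro u
      have h1 : HasDerivAt x 0 u := by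
        have h2 := hsol u; rwa [show f (x u) = 0 from h u] at h2
      rw [h1.hasFDerivAt.fderiv]
      ext v
      simp
    obtain ⟨t₀, ht₀⟩ := hy_ne
    have hopen : IsOpen {t : ℝ | y t ≠ 0} := isOpen_compl_singleton.preimage hy_cont
    obtain ⟨δ, hδ, hball⟩ := Metric.isOpen_iff.mp hopen t₀ ht₀
    set ε := min (δ/2) (T/2) with hε
    have hεpos : 0 < ε := lt_min (by linarith) (by linarith)
    have hεδ : ε < δ := lt_of_le_of_lt (min_le_left _ _) (by linarith)
    have hεT : 2 * ε ≤ T := by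
      have h2 := min_le_right (δ/2) (T/2)
      rw [hε]
      linarith
    have hyn : Function.Periodic (fun t => ‖y t‖^2) T := fun t => by simp only [hyper t]
    have hshift : A = ∫ t in (t₀ - ε)..(t₀ - ε + T), ‖y t‖^2 := by
      rw [hA]
      have h3 := hyn.intervalIntegral_add_eq 0 (t₀ - ε)
      rw [zero_add] at h3
      exact h3
    have hsub : (∫ t in (t₀ - ε)..(t₀ + ε), ‖y t‖^2) ≤ ∫ t in (t₀ - ε)..(t₀ - ε + T), ‖y t‖^2 := by
      apply intervalIntegral.integral_mono_interval (le_refl (t₀ - ε)) (by linarith) (by linarith)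
      · filter_upwards with u
        positivity
      · exact (hy_cont.norm.pow 2).intervalIntegrable _ _
    have hpos2 : 0 < ∫ t in (t₀ - ε)..(t₀ + ε), ‖y t‖^2 := by
      apply intervalIntegral.intervalIntegral_pos_of_pos_on
        ((hy_cont.norm.pow 2).intervalIntegrable _ _)
      · intro u hu
        obtain ⟨hu1, hu2⟩ := hu
        have hu' : u ∈ Metric.ball t₀ δ := by
          rw [Metric.mem_ball, Real.dist_eq, abs_sub_lt_iff]
          constructor <;> linarith
        have hyu : y u ≠ 0 := hball hu'
        exact pow_pos (norm_pos_iff.mpr hyu) 2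
      · linarith
    rw [hshift]
    linarith
  -- conclude
  have hA2 : A ≤ (T/(2*π))^2 * L^2 * A := by
    calc A ≤ (T/(2*π))^2 * B := hAB
      _ ≤ (T/(2*π))^2 * (L^2 * A) := mul_le_mul_of_nonneg_left hBA (by positivity)
      _ = (T/(2*π))^2 * L^2 * A := by ring
  have hkey : 1 ≤ (T/(2*π))^2 * L^2 := by
    by_contra hcon
    push_neg at hcon
    nlinarith [mul_lt_mul_of_pos_right hcon hApos]
  have h4 : (2*π)^2 * 1 ≤ (2*π)^2 * ((T/(2*π))^2 * L^2) :=
    mul_le_mul_of_nonneg_left hkey (by positivity)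
  have h5 : (2*π)^2 * ((T/(2*π))^2 * L^2) = (T*L)^2 := by
    field_simp
  rw [div_le_iff₀ hL]
  nlinarith [Real.pi_pos, sq_nonneg (T * L - 2 * π), mul_pos hT hL]
end

section
/- In the Lorenz system with σ > 0, ρ > 2, β > 0, every non-constant periodic solution x(t) that is invariant under the symmetry (x₁,x₂,x₃) ↦ (−x₁,−x₂,x₃) has period T ≥ 2π/(σ√(ρ−1)). -/
open scoped Real Topology
open Filter Set intervalIntegral


lemma tendsto_div_sin : Filter.Tendsto (fun y : ℝ => y / Real.sin y) (𝓝[>] 0) (𝓝 1) := by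
  have h1 : Filter.Tendsto (fun y : ℝ => Real.sin y / y) (𝓝[≠] (0:ℝ)) (𝓝 1) := by
    have := hasDerivAt_iff_tendsto_slope.mp (Real.hasDerivAt_sin 0)
    simp only [Real.cos_zero] at this
    refine this.congr fun y => ?_
    simp [slope_def_field, Real.sin_zero]
  have h2 := (h1.inv₀ one_ne_zero).mono_left (nhdsWithin_mono _ (show Set.Ioi (0:ℝ) ⊆ {0}ᶜ by
    intro y hy; exact ne_of_gt hy))
  simpa [inv_div] using h2

lemma bdry_limit {k : ℝ} (hk : 0 < k) {f : ℝ → ℝ} {d a : ℝ}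
    (hf : HasDerivAt f d a) (ha : f a = 0) :
    Filter.Tendsto (fun t => k * Real.cos (k*(t-a)) / Real.sin (k*(t-a)) * (f t)^2)
      (𝓝[>] a) (𝓝 0) := by
  have hmap : Filter.Tendsto (fun t : ℝ => k*(t-a)) (𝓝[>] a) (𝓝[>] (0:ℝ)) := by
    apply tendsto_nhdsWithin_of_tendsto_nhds_of_eventually_within
    · have : Filter.Tendsto (fun t : ℝ => k*(t-a)) (𝓝 a) (𝓝 (k*(a-a))) :=
        (tendsto_id.sub_const a).const_mul k
      simpa using this.mono_left nhdsWithin_le_nhds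
    · filter_upwards [self_mem_nhdsWithin] with t ht
      exact mul_pos hk (sub_pos.mpr ht)
  have hcos : Filter.Tendsto (fun t : ℝ => Real.cos (k*(t-a))) (𝓝[>] a) (𝓝 1) := by
    have : Filter.Tendsto (fun t : ℝ => Real.cos (k*(t-a))) (𝓝[>] a) (𝓝 (Real.cos 0)) :=
      (Real.continuous_cos.tendsto 0).comp (hmap.mono_right nhdsWithin_le_nhds)
    simpa using this
  have hsin : Filter.Tendsto (fun t : ℝ => (k*(t-a)) / Real.sin (k*(t-a))) (𝓝[>] a) (𝓝 1) :=
    tendsto_div_sin.comp hmap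
  have hslope : Filter.Tendsto (fun t => (f t - f a)/(t-a)) (𝓝[>] a) (𝓝 d) := by
    have := hasDerivAt_iff_tendsto_slope.mp hf
    refine (this.mono_left (nhdsWithin_mono _ (fun y hy => ne_of_gt hy))).congr fun y => ?_
    simp [slope_def_field]
  have hft : Filter.Tendsto f (𝓝[>] a) (𝓝 0) := by
    have : Filter.Tendsto f (𝓝[>] a) (𝓝 (f a)) :=
      hf.continuousAt.tendsto.mono_left nhdsWithin_le_nhds
    rwa [ha] at this
  have hlim := ((hcos.mul hsin).mul hslope).mul hft
  rw [show (1:ℝ)*1*d*0 = 0 by ring] at hlim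
  refine hlim.congr' ?_
  have hmem : Set.Ioo a (a + π/k) ∈ 𝓝[>] a :=
    Ioo_mem_nhdsGT_of_mem ⟨le_refl a, by have := div_pos Real.pi_pos hk; linarith⟩
  filter_upwards [hmem] with t ht
  have hta : t - a ≠ 0 := ne_of_gt (sub_pos.mpr ht.1)
  have hs : Real.sin (k*(t-a)) ≠ 0 := by
    apply ne_of_gt
    apply Real.sin_pos_of_pos_of_lt_pi (mul_pos hk (sub_pos.mpr ht.1))
    have : t - a < π/k := by linarith [ht.2]
    calc k*(t-a) < k*(π/k) := by exact (mul_lt_mul_iff_right₀ hk).mpr this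
    _ = π := by field_simp
  rw [ha]
  field_simp
  ring

lemma wirtinger_s7 {f f' : ℝ → ℝ} (hd : ∀ t, HasDerivAt f (f' t) t) (hc : Continuous f')
    {a b : ℝ} (hab : a < b) (ha : f a = 0) (hb : f b = 0) :
    (π/(b-a))^2 * ∫ t in a..b, (f t)^2 ≤ ∫ t in a..b, (f' t)^2 := by
  have hfc : Continuous f := continuous_iff_continuousAt.mpr fun t => (hd t).continuousAt
  have hba : (0:ℝ) < b - a := sub_pos.mpr hab
  set k : ℝ := π/(b-a) with hkdef
  have hk : 0 < k := div_pos Real.pi_pos hba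
  have hkba : k * (b - a) = π := by rw [hkdef, div_mul_cancel₀ _ hba.ne']
  set g : ℝ → ℝ := fun t => (f' t)^2 - k^2*(f t)^2 with hgdef
  have hgc : Continuous g := by continuity
  set G : ℝ → ℝ := fun t => k * Real.cos (k*(t-a)) / Real.sin (k*(t-a)) * (f t)^2 with hGdef
  have hGa : G a = 0 := by simp [hGdef, ha]
  have hGb : G b = 0 := by simp [hGdef, hb]
  set P : ℝ → ℝ := fun t => ∫ x in a..t, g x with hPdef
  have hP : ∀ t, HasDerivAt P (g t) t := fun t =>
    intervalIntegral.integral_hasDerivAt_right (hgc.intervalIntegrable a t)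
      hgc.stronglyMeasurable.stronglyMeasurableAtFilter hgc.continuousAt
  set H : ℝ → ℝ := fun t => P t - G t with hHdef
  -- interior: sin positive
  have hsinpos : ∀ t ∈ Ioo a b, 0 < Real.sin (k*(t-a)) := by
    intro t ht
    apply Real.sin_pos_of_pos_of_lt_pi (mul_pos hk (sub_pos.mpr ht.1))
    rw [← hkba]
    exact (mul_lt_mul_iff_right₀ hk).mpr (by linarith [ht.2])
  -- derivative of G on interior
  have hG' : ∀ t ∈ Ioo a b, HasDerivAt G
      (g t - (f' t - k * Real.cos (k*(t-a)) / Real.sin (k*(t-a)) * f t)^2) t := by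
    intro t ht
    have hs := (hsinpos t ht).ne'
    have hlin : HasDerivAt (fun u : ℝ => k*(u-a)) k t := by
      simpa using ((hasDerivAt_id t).sub_const a).const_mul k
    have hcos : HasDerivAt (fun u : ℝ => k * Real.cos (k*(u-a)))
        (k * (-Real.sin (k*(t-a)) * k)) t :=
      ((Real.hasDerivAt_cos _).comp t hlin).const_mul k
    have hsin : HasDerivAt (fun u : ℝ => Real.sin (k*(u-a)))
        (Real.cos (k*(t-a)) * k) t := (Real.hasDerivAt_sin _).comp t hlin
    have hquot := hcos.fun_div hsin hs
    have hsq : HasDerivAt (fun u => (f u)^2) (f' t * f t + f t * f' t) t := by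
      simpa [pow_two] using ((hd t).fun_mul (hd t))
    have := hquot.fun_mul hsq
    refine this.congr_deriv (Eq.symm ?_)
    have hpyth := Real.sin_sq_add_cos_sq (k*(t-a))
    simp only [hgdef]
    field_simp
    nlinarith [hpyth, sq_nonneg (Real.sin (k*(t-a))), sq_nonneg (f t), sq_nonneg (f' t)]
  -- continuity of H on Icc
  have hGcont : ContinuousOn G (Icc a b) := by
    intro t ht
    rcases eq_or_lt_of_le ht.1 with h1 | h1
    · rw [← h1]
      have hlim := bdry_limit hk (hd a) ha
      have : ContinuousWithinAt G (Ioi a) a := by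
        rw [ContinuousWithinAt, hGa]
        exact hlim
      exact ((continuousWithinAt_Ioi_iff_Ici).mp this).mono Icc_subset_Ici_self
    rcases eq_or_lt_of_le ht.2 with h2 | h2
    · rw [h2]
      clear ht
      set t := b with htb
      -- reflected boundary limit
      have hrefl : HasDerivAt (fun τ => f (a + t - τ)) (-(f' t)) a := by
        have hinner : HasDerivAt (fun τ : ℝ => a + t - τ) (-1) a := by
          simpa using ((hasDerivAt_id (a:ℝ)).const_sub (a+t))
        have := (hd (a + t - a)).comp a hinner
        simpa [mul_comm, Function.comp_def] using this
      have hfa' : f (a + t - a) = 0 := by simpa using hb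
      have hlim := bdry_limit hk hrefl (by simpa using hb)
      have hmapr : Filter.Tendsto (fun u : ℝ => a + t - u) (𝓝[<] t) (𝓝[>] a) := by
        apply tendsto_nhdsWithin_of_tendsto_nhds_of_eventually_within
        · have : Filter.Tendsto (fun u : ℝ => a + t - u) (𝓝 t) (𝓝 (a + t - t)) :=
            (tendsto_const_nhds.sub tendsto_id)
          simpa using this.mono_left nhdsWithin_le_nhds
        · filter_upwards [self_mem_nhdsWithin] with u hu
          simp only [mem_Ioi]
          have : u < t := hu
          linarith
      have hcomp := hlim.comp hmapr
      have heq : ∀ u, -((fun τ => k * Real.cos (k*(τ-a)) / Real.sin (k*(τ-a)) *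
          (f (a + t - τ))^2) ((fun u : ℝ => a + t - u) u)) = G u := by
        intro u
        have h1 : k*((a + t - u) - a) = π - k*(u-a) := by
          have : (a + t - u) - a = (t - a) - (u - a) := by ring
          rw [this]
          rw [htb, mul_sub, hkba]
        simp only [hGdef]
        rw [h1]
        rw [Real.cos_pi_sub, Real.sin_pi_sub]
        have : a + t - (a + t - u) = u := by ring
        rw [show a + t - (a + t - u) = u by ring]
        ring
      have : ContinuousWithinAt G (Iio t) t := by
        rw [ContinuousWithinAt, hGb]
        have := hcomp.neg
        rw [neg_zero] at this
        exact this.congr heq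
      exact ((continuousWithinAt_Iio_iff_Iic).mp this).mono Icc_subset_Iic_self
    · exact ((hG' t ⟨h1, h2⟩).continuousAt).continuousWithinAt
  have hHcont : ContinuousOn H (Icc a b) :=
    (continuous_iff_continuousAt.mpr fun t => (hP t).continuousAt).continuousOn.sub hGcont
  -- monotonicity
  have hmono : MonotoneOn H (Icc a b) := by
    apply monotoneOn_of_deriv_nonneg (convex_Icc a b) hHcont
    · rw [interior_Icc]
      intro t ht
      exact ((hP t).sub (hG' t ht)).differentiableAt.differentiableWithinAt
    · rw [interior_Icc]
      intro t ht
      have := ((hP t).fun_sub (hG' t ht)).deriv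
      rw [this]
      have : g t - (g t - (f' t - k * Real.cos (k*(t-a)) / Real.sin (k*(t-a)) * f t)^2)
          = (f' t - k * Real.cos (k*(t-a)) / Real.sin (k*(t-a)) * f t)^2 := by ring
      rw [this]
      positivity
  have hHab := hmono (left_mem_Icc.mpr hab.le) (right_mem_Icc.mpr hab.le) hab.le
  have hHa : H a = 0 := by simp [hHdef, hPdef, hGa]
  have hHb : H b = ∫ x in a..b, g x := by simp [hHdef, hPdef, hGb]
  rw [hHa, hHb] at hHab
  have hsplit : (∫ x in a..b, g x) =
      (∫ t in a..b, (f' t)^2) - k^2 * ∫ t in a..b, (f t)^2 := by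
    rw [hgdef]
    rw [intervalIntegral.integral_sub (f := fun t => f' t ^ 2) (g := fun t => k^2 * f t ^ 2) ((hc.fun_pow 2).intervalIntegrable a b)
      ((continuous_const.mul (hfc.fun_pow 2)).intervalIntegrable a b)]
    rw [intervalIntegral.integral_const_mul]
  rw [hsplit] at hHab
  linarith [hHab]

set_option maxHeartbeats 1000000 in
/-- In the Lorenz system with `σ > 0`, `ρ > 2`, `β > 0`, every non-constant periodic
solution invariant under the symmetry `(x₁,x₂,x₃) ↦ (−x₁,−x₂,x₃)` (with time shift `T/2`)
has period `T ≥ 2π/(σ√(ρ−1))`. -/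
theorem lorenz_symmetric_period_bound
    (σ ρ β : ℝ) (hσ : 0 < σ) (hρ : 2 < ρ) (hβ : 0 < β)
    (x₁ x₂ x₃ : ℝ → ℝ)
    (hsol : ∀ t, HasDerivAt x₁ (σ * (x₂ t - x₁ t)) t ∧
                 HasDerivAt x₂ (x₁ t * (ρ - x₃ t) - x₂ t) t ∧
                 HasDerivAt x₃ (x₁ t * x₂ t - β * x₃ t) t)
    (T : ℝ) (hT : 0 < T)
    (hper : ∀ t, x₁ (t + T) = x₁ t ∧ x₂ (t + T) = x₂ t ∧ x₃ (t + T) = x₃ t)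
    (hsym : ∀ t, x₁ (t + T / 2) = -x₁ t ∧ x₂ (t + T / 2) = -x₂ t ∧ x₃ (t + T / 2) = x₃ t)
    (hnonconst : ∃ t s, (x₁ t, x₂ t, x₃ t) ≠ (x₁ s, x₂ s, x₃ s)) :
    2 * π / (σ * Real.sqrt (ρ - 1)) ≤ T := by
  have hc1 : Continuous x₁ := continuous_iff_continuousAt.mpr fun t => (hsol t).1.continuousAt
  have hc2 : Continuous x₂ := continuous_iff_continuousAt.mpr fun t => (hsol t).2.1.continuousAt
  have hc3 : Continuous x₃ := continuous_iff_continuousAt.mpr fun t => (hsol t).2.2.continuousAt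
  -- Case: x₁ identically zero leads to contradiction
  by_cases hzero : ∀ t, x₁ t = 0
  · exfalso
    have hx2 : ∀ t, x₂ t = 0 := by
      intro t
      have h1 : HasDerivAt x₁ (σ * (x₂ t - x₁ t)) t := (hsol t).1
      have h2 : HasDerivAt x₁ 0 t := by
        have : x₁ = fun _ => 0 := funext hzero
        rw [this]; exact hasDerivAt_const t 0
      have hu := h1.unique h2
      rw [hzero t, sub_zero] at hu
      exact (mul_eq_zero.mp hu).resolve_left hσ.ne'
    have hw : ∀ t, HasDerivAt (fun u => x₃ u * Real.exp (β * u)) 0 t := by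
      intro t
      have h3 : HasDerivAt x₃ (x₁ t * x₂ t - β * x₃ t) t := (hsol t).2.2
      have he : HasDerivAt (fun u : ℝ => Real.exp (β * u)) (β * Real.exp (β * t)) t := by
        have hlin : HasDerivAt (fun u : ℝ => β * u) β t := by
          simpa using (hasDerivAt_id t).const_mul β
        simpa [mul_comm, Function.comp_def] using (Real.hasDerivAt_exp (β*t)).comp t hlin
      have := h3.mul he
      have heq : (x₁ t * x₂ t - β * x₃ t) * Real.exp (β * t)
          + x₃ t * (β * Real.exp (β * t)) = 0 := by
        rw [hzero t, hx2 t]; ring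
      rwa [heq] at this
    have hwconst : ∀ s t : ℝ, x₃ s * Real.exp (β * s) = x₃ t * Real.exp (β * t) := by
      intro s t
      exact is_const_of_deriv_eq_zero (fun u => (hw u).differentiableAt)
        (fun u => (hw u).deriv) s t
    have hx30 : x₃ 0 = 0 := by
      have h := hwconst T 0
      have hx3T : x₃ T = x₃ 0 := by simpa using (hper 0).2.2
      rw [hx3T] at h
      simp only [mul_zero, Real.exp_zero, mul_one] at h
      have hmz : x₃ 0 * (Real.exp (β * T) - 1) = 0 := by
        rw [mul_sub, mul_one, h, sub_self]
      have hexp : 1 < Real.exp (β * T) := by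
        rw [← Real.exp_zero]
        exact Real.exp_lt_exp.mpr (by positivity)
      rcases mul_eq_zero.mp hmz with h' | h'
      · exact h'
      · exact absurd h' (by linarith)
    have hx3 : ∀ t, x₃ t = 0 := by
      intro t
      have h := hwconst t 0
      rw [hx30, zero_mul] at h
      rcases mul_eq_zero.mp h with h' | h'
      · exact h'
      · exact absurd h' (Real.exp_ne_zero _)
    obtain ⟨t, s, hne⟩ := hnonconst
    exact hne (by rw [hzero t, hzero s, hx2 t, hx2 s, hx3 t, hx3 s])
  -- Main case
  push_neg at hzero
  obtain ⟨c, hc⟩ := hzero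
  have hT2 : (0:ℝ) < T/2 := by linarith
  -- find a zero of x₁
  have hzeroex : ∃ t₀ ∈ Icc (0:ℝ) (T/2), x₁ t₀ = 0 := by
    have hsymm0 : x₁ (T/2) = -x₁ 0 := by simpa using (hsym 0).1
    rcases le_or_gt (x₁ 0) 0 with h | h
    · have : (0:ℝ) ∈ Icc (x₁ 0) (x₁ (T/2)) := by
        rw [hsymm0]; constructor <;> linarith
      obtain ⟨t₀, ht₀, het⟩ := intermediate_value_Icc hT2.le hc1.continuousOn this
      exact ⟨t₀, ht₀, het⟩
    · have : (0:ℝ) ∈ Icc (x₁ (T/2)) (x₁ 0) := by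
        rw [hsymm0]; constructor <;> linarith
      obtain ⟨t₀, ht₀, het⟩ := intermediate_value_Icc' hT2.le hc1.continuousOn this
      exact ⟨t₀, ht₀, het⟩
  obtain ⟨t₀, _, hx1t₀⟩ := hzeroex
  set a := t₀ with hadef
  set b := t₀ + T/2 with hbdef
  have hab : a < b := by rw [hadef, hbdef]; linarith
  have hba : b - a = T/2 := by rw [hadef, hbdef]; ring
  have hx1b : x₁ b = 0 := by
    rw [hbdef]
    rw [(hsym t₀).1, hx1t₀]; ring
  -- x₁² is T/2 periodic
  have hperiodic : Function.Periodic (fun t => (x₁ t)^2) (T/2) := by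
    intro t
    simp only
    rw [(hsym t).1]; ring
  -- positivity of the integral
  have hI : 0 < ∫ t in a..b, (x₁ t)^2 := by
    obtain ⟨y, hy, hyeq⟩ := hperiodic.exists_mem_Ico hT2 c a
    apply intervalIntegral.integral_pos hab ((hc1.fun_pow 2).continuousOn)
    · intro t _; positivity
    · refine ⟨y, ⟨hy.1, by rw [hbdef]; exact hy.2.le⟩, ?_⟩
      have : (x₁ c)^2 > 0 := by positivity
      rw [hyeq] at this
      exact this
  -- energy identity via Lyapunov function
  set v : ℝ → ℝ := fun t => σ^2*β*(x₃ t)^2 - σ^2*(ρ-1)*(x₁ t)^2 + (σ*(x₂ t - x₁ t))^2 with hvdef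
  set V : ℝ → ℝ := fun t => σ*(ρ-2)/2*(x₁ t)^2 - σ^2/2*(x₂ t)^2 - σ^2/2*(x₃ t)^2 with hVdef
  have hVderiv : ∀ t, HasDerivAt V (v t) t := by
    intro t
    obtain ⟨h1, h2, h3⟩ := hsol t
    have hsq1 : HasDerivAt (fun u => (x₁ u)^2)
        ((σ * (x₂ t - x₁ t)) * x₁ t + x₁ t * (σ * (x₂ t - x₁ t))) t := by
      simpa [pow_two] using h1.fun_mul h1
    have hsq2 : HasDerivAt (fun u => (x₂ u)^2)
        ((x₁ t * (ρ - x₃ t) - x₂ t) * x₂ t + x₂ t * (x₁ t * (ρ - x₃ t) - x₂ t)) t := by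
      simpa [pow_two] using h2.fun_mul h2
    have hsq3 : HasDerivAt (fun u => (x₃ u)^2)
        ((x₁ t * x₂ t - β * x₃ t) * x₃ t + x₃ t * (x₁ t * x₂ t - β * x₃ t)) t := by
      simpa [pow_two] using h3.fun_mul h3
    have := ((hsq1.const_mul (σ*(ρ-2)/2)).fun_sub (hsq2.const_mul (σ^2/2))).fun_sub
      (hsq3.const_mul (σ^2/2))
    refine this.congr_deriv (Eq.symm ?_)
    simp only [hvdef]
    ring
  have hVab : V b = V a := by
    simp only [hVdef, hbdef]
    rw [(hsym t₀).1, (hsym t₀).2.1, (hsym t₀).2.2]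
    ring
  have hvcont : Continuous v := by
    simp only [hvdef]; fun_prop
  have hintv : (∫ t in a..b, v t) = 0 := by
    rw [intervalIntegral.integral_eq_sub_of_hasDerivAt
      (fun t _ => hVderiv t) (hvcont.intervalIntegrable a b)]
    rw [hVab]; ring
  have hsplit : (∫ t in a..b, v t) =
      σ^2*β*(∫ t in a..b, (x₃ t)^2) - σ^2*(ρ-1)*(∫ t in a..b, (x₁ t)^2)
      + ∫ t in a..b, (σ*(x₂ t - x₁ t))^2 := by
    simp only [hvdef]
    rw [intervalIntegral.integral_add (f := fun t => σ^2*β*x₃ t^2 - σ^2*(ρ-1)*x₁ t^2)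
        (g := fun t => (σ*(x₂ t - x₁ t))^2) (((continuous_const.mul (hc3.fun_pow 2)).sub
        (continuous_const.mul (hc1.fun_pow 2))).intervalIntegrable a b)
        (((continuous_const.mul (hc2.sub hc1)).fun_pow 2).intervalIntegrable a b),
      intervalIntegral.integral_sub (f := fun t => σ^2*β*x₃ t^2) (g := fun t => σ^2*(ρ-1)*x₁ t^2)
        ((continuous_const.mul (hc3.fun_pow 2)).intervalIntegrable a b)
        ((continuous_const.mul (hc1.fun_pow 2)).intervalIntegrable a b),
      intervalIntegral.integral_const_mul, intervalIntegral.integral_const_mul]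
  have hI3 : 0 ≤ ∫ t in a..b, (x₃ t)^2 :=
    intervalIntegral.integral_nonneg hab.le (fun u _ => by positivity)
  have henergy : (∫ t in a..b, (σ*(x₂ t - x₁ t))^2)
      ≤ σ^2*(ρ-1)*(∫ t in a..b, (x₁ t)^2) := by
    have := hsplit ▸ hintv
    nlinarith [mul_nonneg (mul_nonneg (sq_nonneg σ) hβ.le) hI3]
  -- Wirtinger
  have hwir := wirtinger_s7 (f := x₁) (f' := fun t => σ*(x₂ t - x₁ t))
    (fun t => (hsol t).1) (by fun_prop) hab hx1t₀ hx1b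
  rw [hba] at hwir
  -- combine
  have hkey : (π/(T/2))^2 ≤ σ^2*(ρ-1) := by
    have h := hwir.trans henergy
    have := (mul_le_mul_iff_left₀ hI).mp h
    exact this
  -- final algebra
  have hρ1 : (0:ℝ) < ρ - 1 := by linarith
  have hs : 0 < Real.sqrt (ρ - 1) := Real.sqrt_pos.mpr hρ1
  have hπ : (0:ℝ) < π := Real.pi_pos
  have h2T : (0:ℝ) < 2*π/T := by positivity
  have hhalf : π/(T/2) = 2*π/T := by
    rw [div_div_eq_mul_div, mul_comm]
  rw [hhalf] at hkey
  have hk2 : (2*π/T)^2 ≤ (σ * Real.sqrt (ρ-1))^2 := by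
    calc (2*π/T)^2 ≤ σ^2*(ρ-1) := hkey
    _ = (σ * Real.sqrt (ρ-1))^2 := by
        rw [mul_pow, Real.sq_sqrt hρ1.le]
  have hle : 2*π/T ≤ σ * Real.sqrt (ρ-1) := by
    have h := Real.sqrt_le_sqrt hk2
    rwa [Real.sqrt_sq h2T.le, Real.sqrt_sq (mul_pos hσ hs).le] at h
  have hfinal : 2*π ≤ σ * Real.sqrt (ρ-1) * T := (div_le_iff₀ hT).mp hle
  rw [div_le_iff₀ (mul_pos hσ hs)]
  nlinarith [hfinal]
end

section
/- Suppose C|φ(x)|² − |L_f φ(x)|² + L_f V(x) + (c − H(x))·ρ(x)·λ ≥ 0 holds for all x ∈ Ω (where ρ is any function and λ a scalar multiplier). Then for every T-periodic solution x(t) of x' = f(x) lying in the level set {H = c} with ∫₀^T φ(x(t)) dt = 0 and φ(x(·)) not identically zero, T ≥ 2π/√C. -/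
open scoped Real

open MeasureTheory Real Complex intervalIntegral AddCircle
open scoped ENNReal

lemma my_parseval {T : ℝ} (hT : 0 < T) {g : ℝ → ℂ} (hg : Continuous g) (hper : g 0 = g T) :
    Summable (fun n : ℤ => ‖fourierCoeffOn hT g n‖ ^ 2) ∧
    ∑' n : ℤ, ‖fourierCoeffOn hT g n‖ ^ 2 = (1/T) * ∫ t in (0:ℝ)..T, ‖g t‖ ^ 2 := by
  haveI : Fact (0 < T) := ⟨hT⟩
  have hGcont : Continuous (liftIco T 0 g) :=
    AddCircle.liftIco_zero_continuous hper hg.continuousOn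
  let G : C(AddCircle T, ℂ) := ⟨liftIco T 0 g, hGcont⟩
  let Gp := ContinuousMap.toLp (E := ℂ) 2 (haarAddCircle) ℂ G
  have hcoeff : ∀ n : ℤ, fourierCoeff (Gp : AddCircle T → ℂ) n = fourierCoeffOn hT g n := by
    intro n
    have h1 : fourierCoeff (Gp : AddCircle T → ℂ) n = fourierCoeff (G : AddCircle T → ℂ) n :=
      fourierCoeff_toLp G n
    rw [h1]
    have h2 := fourierCoeff_liftIco_eq (T := T) (a := 0) g n
    rw [show (G : AddCircle T → ℂ) = liftIco T 0 g from rfl, h2]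
    congr 1
    exact zero_add T
  constructor
  · have hs := (lp.memℓp (fourierBasis.repr Gp)).summable (by norm_num : 0 < (2:ℝ≥0∞).toReal)
    have : (fun n : ℤ => ‖fourierCoeffOn hT g n‖ ^ 2)
        = fun n : ℤ => ‖(fourierBasis.repr Gp) n‖ ^ (2:ℝ≥0∞).toReal := by
      funext n
      rw [fourierBasis_repr, hcoeff n]
      norm_num [Real.rpow_natCast]
    rw [this]; exact hs
  · have hP := tsum_sq_fourierCoeff Gp
    simp_rw [hcoeff] at hP
    rw [hP]
    -- ∫ over AddCircle of ‖Gp‖² haar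
    have hae : ∫ t : AddCircle T, ‖(Gp : AddCircle T → ℂ) t‖ ^ 2 ∂haarAddCircle
        = ∫ t : AddCircle T, ‖(G : AddCircle T → ℂ) t‖ ^ 2 ∂haarAddCircle := by
      refine integral_congr_ae ?_
      filter_upwards [ContinuousMap.coeFn_toLp (p := 2) (haarAddCircle) (𝕜 := ℂ) G] with t ht
      rw [ht]
    rw [hae]
    have hvol : ∫ t : AddCircle T, ‖(G : AddCircle T → ℂ) t‖ ^ 2
        = T * ∫ t : AddCircle T, ‖(G : AddCircle T → ℂ) t‖ ^ 2 ∂haarAddCircle := by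
      rw [volume_eq_smul_haarAddCircle, MeasureTheory.integral_smul_measure, ENNReal.toReal_ofReal hT.le,
        smul_eq_mul]
    have hpre := AddCircle.intervalIntegral_preimage T 0
      (fun z : AddCircle T => ‖(G : AddCircle T → ℂ) z‖ ^ 2)
    rw [zero_add] at hpre
    have hgg : (∫ t in (0:ℝ)..T, ‖(G : AddCircle T → ℂ) (t : AddCircle T)‖ ^ 2)
        = ∫ t in (0:ℝ)..T, ‖g t‖ ^ 2 := by
      refine intervalIntegral.integral_congr_ae ?_
      have hTne : ∀ᵐ t : ℝ, t ≠ T := by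
        rw [MeasureTheory.ae_iff]
        simpa using Real.volume_singleton
      filter_upwards [hTne] with t ht hmem
      rw [Set.uIoc_of_le hT.le] at hmem
      have : t ∈ Set.Ico (0:ℝ) T := ⟨hmem.1.le, lt_of_le_of_ne hmem.2 ht⟩
      rw [show (G : AddCircle T → ℂ) = liftIco T 0 g from rfl, liftIco_zero_coe_apply this]
    have := hpre.symm.trans hgg
    rw [← this, hvol]
    field_simp

lemma wirtinger_complex {T : ℝ} (hT : 0 < T) {g gd : ℝ → ℂ}
    (hg : ∀ t, HasDerivAt g (gd t) t) (hgd : Continuous gd)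
    (hper : g 0 = g T) (hperd : gd 0 = gd T)
    (hmean : (∫ t in (0:ℝ)..T, g t) = 0) :
    (2 * π / T) ^ 2 * ∫ t in (0:ℝ)..T, ‖g t‖ ^ 2 ≤ ∫ t in (0:ℝ)..T, ‖gd t‖ ^ 2 := by
  have hgc : Continuous g := continuous_iff_continuousAt.2 fun t => (hg t).continuousAt
  obtain ⟨hAs, hA⟩ := my_parseval hT hgc hper
  obtain ⟨hBs, hB⟩ := my_parseval hT hgd hperd
  -- zeroth coefficients
  have ha0 : fourierCoeffOn hT g 0 = 0 := by
    rw [fourierCoeffOn_eq_integral]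
    simp [hmean]
  -- termwise bound
  have hterm : ∀ n : ℤ, (2 * π / T) ^ 2 * ‖fourierCoeffOn hT g n‖ ^ 2
      ≤ ‖fourierCoeffOn hT gd n‖ ^ 2 := by
    intro n
    rcases eq_or_ne n 0 with rfl | hn
    · simp only [ha0, norm_zero]
      have : (0:ℝ) ≤ ‖fourierCoeffOn hT gd 0‖ ^ 2 := sq_nonneg _
      nlinarith
    · have hrel := fourierCoeffOn_of_hasDerivAt hT hn (fun t _ => hg t)
        (hgd.intervalIntegrable 0 T)
      rw [hper, sub_self, mul_zero, zero_sub] at hrel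
      simp only [Complex.ofReal_zero, sub_zero] at hrel
      have hnorm : ‖fourierCoeffOn hT g n‖
          = (2 * π * |(n:ℝ)|)⁻¹ * (T * ‖fourierCoeffOn hT gd n‖) := by
        rw [hrel]
        rw [norm_mul, norm_neg, norm_mul, norm_div, norm_one]
        simp [abs_of_pos hT, abs_of_pos Real.pi_pos, mul_comm, mul_assoc, mul_left_comm]
      have hn1 : (1:ℝ) ≤ |(n:ℝ)| := by
        rw [← Int.cast_abs]; exact_mod_cast Int.one_le_abs hn
      have hb : (2 * π / T) * ‖fourierCoeffOn hT g n‖ ≤ ‖fourierCoeffOn hT gd n‖ := by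
        rw [hnorm]
        have hπ : (0:ℝ) < 2 * π := by positivity
        rw [div_mul_eq_mul_div, div_le_iff₀ hT]
        calc 2 * π * ((2 * π * |(n:ℝ)|)⁻¹ * (T * ‖fourierCoeffOn hT gd n‖))
            = (T * ‖fourierCoeffOn hT gd n‖) / |(n:ℝ)| := by
              field_simp
          _ ≤ T * ‖fourierCoeffOn hT gd n‖ := by
              apply div_le_self (by positivity) hn1
          _ = ‖fourierCoeffOn hT gd n‖ * T := mul_comm _ _
      have h1 : (0:ℝ) ≤ (2 * π / T) * ‖fourierCoeffOn hT g n‖ := by positivity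
      calc (2 * π / T) ^ 2 * ‖fourierCoeffOn hT g n‖ ^ 2
          = ((2 * π / T) * ‖fourierCoeffOn hT g n‖) ^ 2 := by ring
        _ ≤ ‖fourierCoeffOn hT gd n‖ ^ 2 := by
            apply sq_le_sq' (by linarith) hb
  have hsum := Summable.tsum_le_tsum hterm (hAs.mul_left _) hBs
  rw [tsum_mul_left, hA, hB] at hsum
  have h2 := mul_le_mul_of_nonneg_left hsum hT.le
  have e1 : T * ((2 * π / T) ^ 2 * (1 / T * ∫ t in (0:ℝ)..T, ‖g t‖ ^ 2))
      = (2 * π / T) ^ 2 * ∫ t in (0:ℝ)..T, ‖g t‖ ^ 2 := by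
    field_simp
  have e2 : T * (1 / T * ∫ t in (0:ℝ)..T, ‖gd t‖ ^ 2) = ∫ t in (0:ℝ)..T, ‖gd t‖ ^ 2 := by
    field_simp
  rw [e1, e2] at h2
  exact h2

lemma wirtinger_vector {T : ℝ} (hT : 0 < T) {m : ℕ} {y yd : ℝ → EuclideanSpace ℝ (Fin m)}
    (hy : ∀ t, HasDerivAt y (yd t) t) (hyd : Continuous yd)
    (hper : y 0 = y T) (hperd : yd 0 = yd T)
    (hmean : (∫ t in (0:ℝ)..T, y t) = 0) :
    (2 * π / T) ^ 2 * ∫ t in (0:ℝ)..T, ‖y t‖ ^ 2 ≤ ∫ t in (0:ℝ)..T, ‖yd t‖ ^ 2 := by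
  have hyc : Continuous y := continuous_iff_continuousAt.2 fun t => (hy t).continuousAt
  have hnormsq : ∀ z : EuclideanSpace ℝ (Fin m), ‖z‖ ^ 2 = ∑ i, (z i) ^ 2 := by
    intro z
    rw [EuclideanSpace.norm_eq, Real.sq_sqrt (by positivity)]
    simp [sq_abs]
  have hcomp : ∀ i : Fin m,
      (2 * π / T) ^ 2 * ∫ t in (0:ℝ)..T, (y t i) ^ 2 ≤ ∫ t in (0:ℝ)..T, (yd t i) ^ 2 := by
    intro i
    set L : EuclideanSpace ℝ (Fin m) →L[ℝ] ℂ :=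
      Complex.ofRealCLM.comp (EuclideanSpace.proj i) with hL
    have hg : ∀ t, HasDerivAt (fun t => L (y t)) (L (yd t)) t :=
      fun t => (L.hasFDerivAt).comp_hasDerivAt t (hy t)
    have hgd : Continuous fun t => L (yd t) := L.continuous.comp hyd
    have hmean' : (∫ t in (0:ℝ)..T, L (y t)) = 0 := by
      rw [L.intervalIntegral_comp_comm (hyc.intervalIntegrable 0 T), hmean, map_zero]
    have hw := wirtinger_complex hT hg hgd (by rw [hper]) (by rw [hperd]) hmean'
    have hnL : ∀ z : EuclideanSpace ℝ (Fin m), ‖L z‖ ^ 2 = (z i) ^ 2 := by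
      intro z
      simp [hL, Complex.norm_real, _root_.sq_abs]
    simp_rw [hnL] at hw
    exact hw
  have hint1 : ∀ i : Fin m, IntervalIntegrable (fun t => (y t i)^2) volume 0 T := by
    intro i
    exact (((continuous_apply i).comp (by fun_prop : Continuous fun t => (y t).ofLp)).pow 2).intervalIntegrable 0 T
  have hint2 : ∀ i : Fin m, IntervalIntegrable (fun t => (yd t i)^2) volume 0 T := by
    intro i
    exact (((continuous_apply i).comp (by fun_prop : Continuous fun t => (yd t).ofLp)).pow 2).intervalIntegrable 0 T
  have e1 : (∫ t in (0:ℝ)..T, ‖y t‖ ^ 2) = ∑ i, ∫ t in (0:ℝ)..T, (y t i) ^ 2 := by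
    simp_rw [hnormsq]
    exact intervalIntegral.integral_finset_sum (fun i _ => hint1 i)
  have e2 : (∫ t in (0:ℝ)..T, ‖yd t‖ ^ 2) = ∑ i, ∫ t in (0:ℝ)..T, (yd t i) ^ 2 := by
    simp_rw [hnormsq]
    exact intervalIntegral.integral_finset_sum (fun i _ => hint2 i)
  rw [e1, e2, Finset.mul_sum]
  exact Finset.sum_le_sum fun i _ => hcomp i

lemma integral_normsq_pos {T : ℝ} (hT : 0 < T) {m : ℕ} {y : ℝ → EuclideanSpace ℝ (Fin m)}
    (hyc : Continuous y) (hper : ∀ t, y (t + T) = y t) {t₀ : ℝ} (h0 : y t₀ ≠ 0) :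
    0 < ∫ t in (0:ℝ)..T, ‖y t‖ ^ 2 := by
  set F : ℝ → ℝ := fun t => ‖y t‖ ^ 2 with hF
  have hFc : Continuous F := (hyc.norm).pow 2
  rw [intervalIntegral.integral_pos_iff_support_of_nonneg_ae
    (Filter.Eventually.of_forall fun t => sq_nonneg _) (hFc.intervalIntegrable 0 T)]
  refine ⟨hT, ?_⟩
  -- reduce t₀ mod T
  have hperiodic : Function.Periodic y T := hper
  set s : ℝ := t₀ - ⌊t₀ / T⌋ * T with hs
  have hys : y s = y t₀ := by
    rw [hs]
    exact hperiodic.sub_int_mul_eq _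
  have hs0 : 0 ≤ s := Int.sub_floor_div_mul_nonneg t₀ hT
  have hsT : s < T := Int.sub_floor_div_mul_lt t₀ hT
  set s' : ℝ := if s = 0 then T else s with hs'
  have hs'pos : 0 < s' := by
    rw [hs']; split
    · exact hT
    · rename_i h; exact lt_of_le_of_ne hs0 (Ne.symm h)
  have hs'le : s' ≤ T := by
    rw [hs']; split
    · exact le_refl T
    · exact hsT.le
  have hys' : y s' ≠ 0 := by
    rw [hs']; split
    · rename_i h
      have : y T = y t₀ := by
        have := hper 0
        rw [zero_add] at this
        rw [this, ← hys, h]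
      rwa [this]
    · rwa [hys]
  -- find a neighborhood where y ≠ 0
  have hopen : IsOpen {u : ℝ | y u ≠ 0} := isOpen_compl_iff.2 (isClosed_singleton.preimage hyc)
  obtain ⟨δ, hδ, hball⟩ := Metric.isOpen_iff.1 hopen s' hys'
  set a : ℝ := max (s' - δ) (s' / 2) with ha
  have has' : a < s' := by
    rw [ha]
    apply max_lt (by linarith) (by linarith)
  have hsub : Set.Ioo a s' ⊆ Function.support F ∩ Set.Ioc 0 T := by
    intro u hu
    constructor
    · have : y u ≠ 0 := by
        apply hball
        rw [Metric.mem_ball, Real.dist_eq, abs_lt]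
        constructor
        · have := lt_of_le_of_lt (le_max_left _ _ : s' - δ ≤ a) hu.1
          linarith
        · linarith [hu.2, hδ]
      simp only [Function.mem_support, hF]
      exact pow_ne_zero 2 (norm_ne_zero_iff.2 this)
    · constructor
      · have := lt_of_le_of_lt (le_max_right _ _ : s' / 2 ≤ a) hu.1
        linarith
      · linarith [hu.2, hs'le]
  show 0 < volume (Function.support F ∩ Set.Ioc 0 T)
  calc (0:ℝ≥0∞) < ENNReal.ofReal (s' - a) := by
        rw [ENNReal.ofReal_pos]; linarith
    _ = volume (Set.Ioo a s') := (Real.volume_Ioo).symm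
    _ ≤ volume (Function.support F ∩ Set.Ioc 0 T) := measure_mono hsub

/-- S-procedure version of the period bound: if
`C|φ|² − |L_f φ|² + L_f V + (c − H)·ρ·λ ≥ 0` on `Ω`, then every `T`-periodic solution of
`x' = f(x)` lying in the level set `{H = c}` along which `φ` has zero mean and is not
identically zero has `T ≥ 2π/√C`. -/
theorem s_procedure_period_bound {n m : ℕ}
    (Ω : Set (EuclideanSpace ℝ (Fin n))) (hΩ : IsOpen Ω)
    (f : EuclideanSpace ℝ (Fin n) → EuclideanSpace ℝ (Fin n)) (hf : ContDiffOn ℝ 1 f Ω)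
    (φ : EuclideanSpace ℝ (Fin n) → EuclideanSpace ℝ (Fin m)) (hφ : ContDiffOn ℝ 1 φ Ω)
    (V : EuclideanSpace ℝ (Fin n) → ℝ) (hV : ContDiffOn ℝ 1 V Ω)
    (H ρ : EuclideanSpace ℝ (Fin n) → ℝ) (c lam : ℝ)
    (C : ℝ) (hC : 0 < C)
    (hineq : ∀ x ∈ Ω,
      C * ‖φ x‖ ^ 2 - ‖fderiv ℝ φ x (f x)‖ ^ 2 + fderiv ℝ V x (f x)
        + (c - H x) * ρ x * lam ≥ 0)
    (x : ℝ → EuclideanSpace ℝ (Fin n)) (hxΩ : ∀ t, x t ∈ Ω)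
    (hsol : ∀ t, HasDerivAt x (f (x t)) t)
    (hlevel : ∀ t, H (x t) = c)
    (T : ℝ) (hT : 0 < T) (hper : ∀ t, x (t + T) = x t)
    (hmean : (∫ t in (0:ℝ)..T, φ (x t)) = 0)
    (hnonzero : ¬ (∀ t, φ (x t) = 0)) :
    2 * π / Real.sqrt C ≤ T := by
  have hxc : Continuous x := continuous_iff_continuousAt.2 fun t => (hsol t).continuousAt
  set y : ℝ → EuclideanSpace ℝ (Fin m) := fun t => φ (x t) with hy_def
  set yd : ℝ → EuclideanSpace ℝ (Fin m) := fun t => fderiv ℝ φ (x t) (f (x t)) with hyd_def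
  set wd : ℝ → ℝ := fun t => fderiv ℝ V (x t) (f (x t)) with hwd_def
  have hxT : x T = x 0 := by have := hper 0; rwa [zero_add] at this
  -- differentiability
  have hφdiff : ∀ t, HasFDerivAt φ (fderiv ℝ φ (x t)) (x t) := fun t =>
    (((hφ.differentiableOn one_ne_zero).differentiableAt (hΩ.mem_nhds (hxΩ t)))).hasFDerivAt
  have hVdiff : ∀ t, HasFDerivAt V (fderiv ℝ V (x t)) (x t) := fun t =>
    (((hV.differentiableOn one_ne_zero).differentiableAt (hΩ.mem_nhds (hxΩ t)))).hasFDerivAt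
  have hy : ∀ t, HasDerivAt y (yd t) t := fun t =>
    (hφdiff t).comp_hasDerivAt t (hsol t)
  have hw : ∀ t, HasDerivAt (fun t => V (x t)) (wd t) t := fun t =>
    (hVdiff t).comp_hasDerivAt t (hsol t)
  -- continuity of derivative data
  have hfc : Continuous fun t => f (x t) :=
    (hf.continuousOn).comp_continuous hxc hxΩ
  have hDφc : Continuous fun t => fderiv ℝ φ (x t) :=
    (hφ.continuousOn_fderiv_of_isOpen hΩ le_rfl).comp_continuous hxc hxΩ
  have hDVc : Continuous fun t => fderiv ℝ V (x t) :=
    (hV.continuousOn_fderiv_of_isOpen hΩ le_rfl).comp_continuous hxc hxΩ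
  have hydc : Continuous yd :=
    isBoundedBilinearMap_apply.continuous.comp (hDφc.prodMk hfc)
  have hwdc : Continuous wd :=
    isBoundedBilinearMap_apply.continuous.comp (hDVc.prodMk hfc)
  have hyc : Continuous y := continuous_iff_continuousAt.2 fun t => (hy t).continuousAt
  -- pointwise inequality along the orbit
  have hpt : ∀ t, 0 ≤ C * ‖y t‖ ^ 2 - ‖yd t‖ ^ 2 + wd t := by
    intro t
    have h := hineq (x t) (hxΩ t)
    rw [hlevel t, sub_self, zero_mul, zero_mul, add_zero] at h
    exact h
  -- integral of wd over a period vanishes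
  have hwdint : (∫ t in (0:ℝ)..T, wd t) = 0 := by
    rw [intervalIntegral.integral_eq_sub_of_hasDerivAt (fun t _ => hw t)
      (hwdc.intervalIntegrable 0 T)]
    rw [hxT, sub_self]
  -- integrate the pointwise inequality
  have hi1 : IntervalIntegrable (fun t => C * ‖y t‖ ^ 2) volume 0 T :=
    ((continuous_const.mul ((hyc.norm).pow 2))).intervalIntegrable 0 T
  have hi2 : IntervalIntegrable (fun t => ‖yd t‖ ^ 2) volume 0 T :=
    ((hydc.norm).pow 2).intervalIntegrable 0 T
  have hi3 : IntervalIntegrable wd volume 0 T := hwdc.intervalIntegrable 0 T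
  have hInonneg : 0 ≤ ∫ t in (0:ℝ)..T, (C * ‖y t‖ ^ 2 - ‖yd t‖ ^ 2 + wd t) :=
    intervalIntegral.integral_nonneg hT.le fun u _ => hpt u
  have hsplit : (∫ t in (0:ℝ)..T, (C * ‖y t‖ ^ 2 - ‖yd t‖ ^ 2 + wd t))
      = C * (∫ t in (0:ℝ)..T, ‖y t‖ ^ 2) - (∫ t in (0:ℝ)..T, ‖yd t‖ ^ 2)
        + ∫ t in (0:ℝ)..T, wd t := by
    rw [intervalIntegral.integral_add (hi1.sub hi2) hi3,
      intervalIntegral.integral_sub hi1 hi2, intervalIntegral.integral_const_mul]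
  rw [hsplit, hwdint, add_zero, sub_nonneg] at hInonneg
  -- Wirtinger
  have hyper : y 0 = y T := by rw [hy_def]; simp [hxT]
  have hydper : yd 0 = yd T := by rw [hyd_def]; simp [hxT]
  have hwirt := wirtinger_vector hT hy hydc hyper hydper hmean
  -- positivity of ∫ ‖y‖²
  push_neg at hnonzero
  obtain ⟨t₀, ht₀⟩ := hnonzero
  have hP : 0 < ∫ t in (0:ℝ)..T, ‖y t‖ ^ 2 :=
    integral_normsq_pos hT hyc (fun t => by rw [hy_def]; simp [hper t]) ht₀
  -- conclude
  have hkey : (2 * π / T) ^ 2 ≤ C := by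
    have := hwirt.trans hInonneg
    exact le_of_mul_le_mul_right this hP
  have h2πT : 0 < 2 * π / T := by positivity
  have hsq : 2 * π / T ≤ Real.sqrt C := by
    rw [← Real.sqrt_sq h2πT.le]
    exact Real.sqrt_le_sqrt hkey
  have hsC : 0 < Real.sqrt C := Real.sqrt_pos.2 hC
  rw [div_le_iff₀ hsC]
  have := mul_le_mul_of_nonneg_right hsq hT.le
  rw [div_mul_cancel₀ _ hT.ne'] at this
  linarith
end
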